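/- arXiv:2306.09643 — 2 statements merged into one kernel-verified Lean document; each statement's English description precedes it below -/
import Mathlib

section
/- Let p_i^0, p_i^1 for i = 1,…,K be strictly positive probability densities on ℝ. For a, b ∈ {0,1}^K, if ∏_{i=1}^K p_i^{a_i}(x_i) = ∏_{i=1}^K p_i^{b_i}(x_i) for all x ∈ ℝ^K, and for each i the densities p_i^0 and p_i^1 are distinct (differ on a set of positive measure), then a = b. -/
open MeasureTheory

theorem distinct_interaction_cases_give_distinct_joints
    (K : ℕ) (p : Fin K → Bool → ℝ → ℝ)
    (hmeas : ∀ i s, Measurable (p i s))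
    (hpos : ∀ i s x, 0 < p i s x)
    (hInt : ∀ i s, Integrable (p i s))
    (hI : ∀ i s, ∫ x, p i s x = 1)
    (hdist : ∀ i, 0 < volume {x : ℝ | p i false x ≠ p i true x})
    (a b : Fin K → Bool)
    (h : ∀ x : Fin K → ℝ, ∏ i, p i (a i) (x i) = ∏ i, p i (b i) (x i)) :
    a = b := by
  funext i
  by_contra hne
  set A := ∏ j ∈ ({i}ᶜ : Finset (Fin K)), p j (a j) 0 with hAdef
  set B := ∏ j ∈ ({i}ᶜ : Finset (Fin K)), p j (b j) 0 with hBdef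
  have key : ∀ t : ℝ, p i (a i) t * A = p i (b i) t * B := by
    intro t
    have hx := h (Function.update (fun _ => (0:ℝ)) i t)
    rw [Fintype.prod_eq_mul_prod_compl i, Fintype.prod_eq_mul_prod_compl i] at hx
    have hupd : ∀ c : Fin K → Bool, ∀ j ∈ ({i}ᶜ : Finset (Fin K)),
        p j (c j) (Function.update (fun _ => (0:ℝ)) i t j) = p j (c j) 0 := by
      intro c j hj
      have hj' : j ≠ i := by simpa using hj
      rw [Function.update_of_ne hj']
    rw [Finset.prod_congr rfl (hupd a), Finset.prod_congr rfl (hupd b),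
      Function.update_self] at hx
    exact hx
  have hA : 0 < A := Finset.prod_pos fun j _ => hpos j _ 0
  have hAB : A = B := by
    have h1 : ∫ t, p i (a i) t * A = A := by
      rw [integral_mul_const, hI]; ring
    have h2 : ∫ t, p i (b i) t * B = B := by
      rw [integral_mul_const, hI]; ring
    rw [← h1, ← h2]
    exact integral_congr_ae (Filter.Eventually.of_forall key)
  have heq : ∀ t, p i (a i) t = p i (b i) t := by
    intro t
    have hk := key t
    rw [← hAB] at hk
    exact mul_right_cancel₀ (ne_of_gt hA) hk
  have hft : ∀ t, p i false t = p i true t := by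
    intro t
    cases ha : a i <;> cases hb : b i
    · exact absurd (ha.trans hb.symm) hne
    · have := heq t; rw [ha, hb] at this; exact this
    · have := heq t; rw [ha, hb] at this; exact this.symm
    · exact absurd (ha.trans hb.symm) hne
  have hempty : {x : ℝ | p i false x ≠ p i true x} = ∅ := by
    ext t; simp [hft t]
  have := hdist i
  rw [hempty] at this
  simp at this
end

section
/- There exist n = ⌊log₂ K⌋ + 2 binary vectors E₁,…,E_n ∈ {0,1}^K such that the columns are pairwise distinct interaction patterns: for all i ≠ j in {1,…,K} and every function b : {0,1} → {0,1}, there exists some m with (E_m)_i ≠ b((E_m)_j), and additionally for every i there exist m, m' with (E_m)_i = 0 and (E_{m'})_i = 1. -/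
theorem log_regimes_suffice_for_distinct_patterns (K : ℕ) (hK : 1 ≤ K) :
    ∃ E : Fin (Nat.log 2 K + 2) → Fin K → Bool,
      (∀ i j : Fin K, i ≠ j → ∀ b : Bool → Bool, ∃ m, E m i ≠ b (E m j)) ∧
      (∀ i : Fin K, (∃ m, E m i = false) ∧ (∃ m', E m' i = true)) := by
  set L := Nat.log 2 K with hL
  have hKlt : K < 2 ^ (L + 1) := Nat.lt_pow_succ_log_self (by norm_num) K
  have falsebit : ∀ i : Fin K, ∃ m : Fin (L + 2), (m : ℕ) ≠ L + 1 ∧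
        ((i : ℕ)).testBit m = false := by
    intro i
    by_contra h
    push_neg at h
    have hi : (i : ℕ) = 2 ^ (L + 1) - 1 := by
      apply Nat.eq_of_testBit_eq
      intro k
      rw [Nat.testBit_two_pow_sub_one]
      by_cases hk : k < L + 1
      · have := h ⟨k, by omega⟩ (by simp; omega)
        simp only [Fin.val_mk] at this
        simp [hk, this]
      · have : (i : ℕ) < 2 ^ k := by
          calc (i : ℕ) < K := i.isLt
          _ < 2 ^ (L + 1) := hKlt
          _ ≤ 2 ^ k := Nat.pow_le_pow_right (by norm_num) (by omega)
        simp [Nat.testBit_eq_false_of_lt this, hk]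
    have : (i : ℕ) < K := i.isLt
    have h1 : 1 ≤ 2 ^ (L + 1) := Nat.one_le_two_pow
    omega
  refine ⟨fun m i => if (m : ℕ) = L + 1 then true else (i : ℕ).testBit m, ?_, ?_⟩
  · intro i j hij b
    have hij' : (i : ℕ) ≠ (j : ℕ) := fun h => hij (Fin.ext h)
    have diffbit : ∃ k, k < L + 1 ∧ (i : ℕ).testBit k ≠ (j : ℕ).testBit k := by
      by_contra h
      push_neg at h
      apply hij'
      apply Nat.eq_of_testBit_eq
      intro k
      by_cases hk : k < L + 1
      · exact h k hk
      · have hi : (i : ℕ) < 2 ^ k := lt_of_lt_of_le (lt_trans i.isLt hKlt)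
          (Nat.pow_le_pow_right (by norm_num) (by omega))
        have hj : (j : ℕ) < 2 ^ k := lt_of_lt_of_le (lt_trans j.isLt hKlt)
          (Nat.pow_le_pow_right (by norm_num) (by omega))
        rw [Nat.testBit_eq_false_of_lt hi, Nat.testBit_eq_false_of_lt hj]
    rcases Bool.eq_false_or_eq_true (b false) with hbf | hbf <;>
      rcases Bool.eq_false_or_eq_true (b true) with hbt | hbt
    · -- b constant true: use false bit of i
      obtain ⟨m, hm, hfb⟩ := falsebit i
      refine ⟨m, ?_⟩
      simp only [if_neg hm, hfb]
      cases hc : b (if (m : ℕ) = L + 1 then true else (j : ℕ).testBit m) <;> simp_all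
      cases h2 : (j : ℕ).testBit m <;> simp_all
    · -- b = not: use last coordinate, both true, b true = false
      refine ⟨⟨L + 1, by omega⟩, ?_⟩
      simp only [Fin.val_mk, if_pos rfl]
      simp [hbt]
    · -- b = id: use differing bit
      obtain ⟨k, hk, hne⟩ := diffbit
      refine ⟨⟨k, by omega⟩, ?_⟩
      simp only [Fin.val_mk, if_neg (by omega : ¬ k = L + 1)]
      cases h1 : (i : ℕ).testBit k <;> cases h2 : (j : ℕ).testBit k <;> simp_all
    · -- b constant false: use last coordinate
      refine ⟨⟨L + 1, by omega⟩, ?_⟩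
      simp only [Fin.val_mk, if_pos rfl]
      simp [hbt]
  · intro i
    obtain ⟨m, hm, hfb⟩ := falsebit i
    exact ⟨⟨m, by simp [if_neg hm, hfb]⟩, ⟨⟨L + 1, by omega⟩, by simp⟩⟩
end
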